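/- Block reduction of the Newton system V̂ d = r to a smaller symmetric positive definite system (derivation of equations (eq-hatdy) and (eq-hatdwP) in Section 4.2). Let σ > 0, ν > 0, 1 ≤ p ≤ n, and partition Q ∈ S^n_+ as Q = [[Q_PP, Q_PZ], [Q_PZᵀ, Q_ZZ]] with Q_PP ∈ ℝ^{p×p}, A = [A_P, A_Z] with A_P ∈ ℝ^{m×p}, and U = Diag(I_p, 0) ∈ ℝ^{n×n}. Let r₁ = (r₁^P; r₁^Z) ∈ ℝ^n and r₂ ∈ ℝ^m, and define r̄₁ := r₁^P − σ(1+ν)^{−1} Q_PZ r₁^Z and r̄₂ := r₂ + σ(1+ν)^{−1} A_P Q_PZ r₁^Z. Then (d̂_w, d̂_y) = ((d̂_w^P; d̂_w^Z), d̂_y) ∈ ℝ^n × ℝ^m solves the system ((1+ν)I_n + σUQ) d̂_w − σUA* d̂_y = r₁, −σAUQ d̂_w + (νI_m + σAUA*) d̂_y = r₂, if and only if (i) d̂_w^Z = (1+ν)^{−1} r₁^Z, (ii) d̂_w^P solves ((1+ν)I_p + σQ_PP + ν^{−1}(1+ν)σ A_P*A_P) d̂_w^P = r̄₁ + ν^{−1}σ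 A_P*(A_P r̄₁ + r̄₂), and (iii) d̂_y = ν^{−1}(A_P r̄₁ + r̄₂ − (1+ν) A_P d̂_w^P). Moreover, the p×p coefficient matrix (1+ν)I_p + σQ_PP + ν^{−1}(1+ν)σ A_P*A_P is symmetric positive definite. -/

import Mathlib

open Matrix

lemma sum_elim_smul {α β : Type*} (c : ℝ) (a : α → ℝ) (b : β → ℝ) :
    c • Sum.elim a b = Sum.elim (c • a) (c • b) := by
  funext i; cases i <;> rfl

lemma sum_elim_add {α β : Type*} (a c : α → ℝ) (b d : β → ℝ) :
    Sum.elim a b + Sum.elim c d = Sum.elim (a + c) (b + d) := by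
  funext i; cases i <;> rfl

lemma sum_elim_sub {α β : Type*} (a c : α → ℝ) (b d : β → ℝ) :
    Sum.elim a b - Sum.elim c d = Sum.elim (a - c) (b - d) := by
  funext i; cases i <;> rfl

lemma sum_elim_eq_iff {α β : Type*} (a c : α → ℝ) (b d : β → ℝ) :
    Sum.elim a b = Sum.elim c d ↔ a = c ∧ b = d := by
  constructor
  · intro h
    exact ⟨funext fun i => congrFun h (.inl i), funext fun i => congrFun h (.inr i)⟩
  · rintro ⟨rfl, rfl⟩; rfl

lemma herm_smul {p : ℕ} (c : ℝ) {M : Matrix (Fin p) (Fin p) ℝ} (h : M.IsHermitian) :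
    (c • M).IsHermitian := by
  rw [Matrix.IsHermitian, Matrix.conjTranspose_smul, h]; simp

lemma newton_core {m p q : ℕ} (σ ν : ℝ) (hσ : 0 < σ) (hν : 0 < ν)
    (QPP : Matrix (Fin p) (Fin p) ℝ) (QPZ : Matrix (Fin p) (Fin q) ℝ)
    (AP : Matrix (Fin m) (Fin p) ℝ)
    (r₁P : Fin p → ℝ) (r₁Z : Fin q → ℝ) (r₂ : Fin m → ℝ)
    (rbar₁ : Fin p → ℝ) (hrbar₁ : rbar₁ = r₁P - (σ * (1 + ν)⁻¹) • (QPZ *ᵥ r₁Z))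
    (rbar₂ : Fin m → ℝ) (hrbar₂ : rbar₂ = r₂ + (σ * (1 + ν)⁻¹) • (AP *ᵥ (QPZ *ᵥ r₁Z)))
    (dP : Fin p → ℝ) (dZ : Fin q → ℝ) (dy : Fin m → ℝ) :
    (((1 + ν) • dP + σ • (QPP *ᵥ dP + QPZ *ᵥ dZ) - σ • APᵀ *ᵥ dy = r₁P ∧ (1 + ν) • dZ = r₁Z) ∧
      -(σ • AP *ᵥ (QPP *ᵥ dP + QPZ *ᵥ dZ)) + ν • dy + σ • AP *ᵥ APᵀ *ᵥ dy = r₂ ↔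
    dZ = (1 + ν)⁻¹ • r₁Z ∧
      (1 + ν) • dP + σ • QPP *ᵥ dP + (ν⁻¹ * (1 + ν) * σ) • (APᵀ * AP) *ᵥ dP =
          rbar₁ + (ν⁻¹ * σ) • APᵀ *ᵥ (AP *ᵥ rbar₁ + rbar₂) ∧
        dy = ν⁻¹ • (AP *ᵥ rbar₁ + rbar₂ - (1 + ν) • AP *ᵥ dP)) := by
  have hν' : ν ≠ 0 := hν.ne'
  have hne : (1 + ν) ≠ 0 := by positivity
  have hνν : ν * ν⁻¹ = 1 := mul_inv_cancel₀ hν'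
  -- the ν-scaled versions of (ii) and (iii)
  have keyiii : (dy = ν⁻¹ • (AP *ᵥ rbar₁ + rbar₂ - (1 + ν) • AP *ᵥ dP)) ↔
      (ν • dy = AP *ᵥ rbar₁ + rbar₂ - (1 + ν) • AP *ᵥ dP) := by
    constructor
    · intro h; rw [h, smul_smul, hνν, one_smul]
    · intro h; rw [← h, smul_smul, inv_mul_cancel₀ hν', one_smul]
  have keyii : ((1 + ν) • dP + σ • QPP *ᵥ dP + (ν⁻¹ * (1 + ν) * σ) • (APᵀ * AP) *ᵥ dP =
        rbar₁ + (ν⁻¹ * σ) • APᵀ *ᵥ (AP *ᵥ rbar₁ + rbar₂)) ↔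
      ((ν * (1 + ν)) • dP + (ν * σ) • QPP *ᵥ dP + ((1 + ν) * σ) • (APᵀ * AP) *ᵥ dP =
        ν • rbar₁ + σ • APᵀ *ᵥ (AP *ᵥ rbar₁ + rbar₂)) := by
    constructor
    · intro h
      have := congrArg (fun v => ν • v) h
      simpa [smul_add, smul_smul, ← mul_assoc, hνν] using this
    · intro h
      have := congrArg (fun v => ν⁻¹ • v) h
      simpa [smul_add, smul_smul, ← mul_assoc, inv_mul_cancel₀ hν', mul_comm ν⁻¹ ν, hνν]
        using this
  rw [keyii, keyiii]
  subst hrbar₁ hrbar₂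
  constructor
  · rintro ⟨⟨h1, h1Z⟩, h2⟩
    have hZ : dZ = (1 + ν)⁻¹ • r₁Z := by
      rw [← h1Z, smul_smul, inv_mul_cancel₀ hne, one_smul]
    subst hZ
    simp only [mulVec_add, mulVec_sub, mulVec_smul, smul_add, smul_sub, smul_smul,
      ← mulVec_mulVec] at h1 h2 ⊢
    have hAP1 := congrArg (fun v => AP *ᵥ v) h1
    simp only [mulVec_add, mulVec_sub, mulVec_smul] at hAP1
    have hy : ν • dy = AP *ᵥ r₁P - (σ * (1 + ν)⁻¹) • (AP *ᵥ (QPZ *ᵥ r₁Z))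
        + (r₂ + (σ * (1 + ν)⁻¹) • (AP *ᵥ (QPZ *ᵥ r₁Z))) - (1 + ν) • AP *ᵥ dP := by
      funext i
      have e1 := congrFun hAP1 i
      have e2 := congrFun h2 i
      simp only [Pi.add_apply, Pi.sub_apply, Pi.neg_apply, Pi.smul_apply, smul_eq_mul] at e1 e2 ⊢
      linear_combination e1 + e2
    have hAPT := congrArg (fun v => APᵀ *ᵥ v) hy
    simp only [mulVec_add, mulVec_sub, mulVec_smul] at hAPT
    refine ⟨by trivial, ?_, ?_⟩
    · funext i
      have e1 := congrFun h1 i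
      have e3 := congrFun hAPT i
      simp only [Pi.add_apply, Pi.sub_apply, Pi.neg_apply, Pi.smul_apply, smul_eq_mul] at e1 e3 ⊢
      linear_combination ν * e1 + σ * e3
    · funext i
      have e4 := congrFun hy i
      simp only [Pi.add_apply, Pi.sub_apply, Pi.neg_apply, Pi.smul_apply, smul_eq_mul] at e4 ⊢
      linear_combination e4
  · rintro ⟨hZ, hii, hiii⟩
    subst hZ
    simp only [mulVec_add, mulVec_sub, mulVec_smul, smul_add, smul_sub, smul_smul,
      ← mulVec_mulVec] at hii hiii ⊢
    have hAPT := congrArg (fun v => APᵀ *ᵥ v) hiii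
    simp only [mulVec_add, mulVec_sub, mulVec_smul] at hAPT
    have e1P : (1 + ν) • dP + (σ • QPP *ᵥ dP + (σ * (1 + ν)⁻¹) • QPZ *ᵥ r₁Z)
        - σ • APᵀ *ᵥ dy = r₁P := by
      apply smul_right_injective (Fin p → ℝ) hν'
      funext i
      have a1 := congrFun hii i
      have a2 := congrFun hAPT i
      simp only [Pi.add_apply, Pi.sub_apply, Pi.neg_apply, Pi.smul_apply, smul_eq_mul] at a1 a2 ⊢
      linear_combination a1 - σ * a2
    have hAPe1 := congrArg (fun v => AP *ᵥ v) e1P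
    simp only [mulVec_add, mulVec_sub, mulVec_smul] at hAPe1
    refine ⟨⟨?_, ?_⟩, ?_⟩
    · convert e1P using 2 <;> simp [smul_smul]
    · simp [smul_smul, mul_inv_cancel₀ hne]
    · funext i
      have a3 := congrFun hAPe1 i
      have a4 := congrFun hiii i
      simp only [Pi.add_apply, Pi.sub_apply, Pi.neg_apply, Pi.smul_apply, smul_eq_mul] at a3 a4 ⊢
      linear_combination a4 - a3



noncomputable section

/-- **Block reduction of the Newton system `V̂ d = r` to a smaller symmetric positive definite
system.**  Let `σ > 0`, `ν > 0`, `1 ≤ p`, and partition `Q ∈ S^n₊` as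
`Q = [[Q_PP, Q_PZ], [Q_PZᵀ, Q_ZZ]]`, `A = [A_P, A_Z]`, `U = Diag(I_p, 0)`.  With
`r̄₁ := r₁^P − σ(1+ν)⁻¹ Q_PZ r₁^Z` and `r̄₂ := r₂ + σ(1+ν)⁻¹ A_P Q_PZ r₁^Z`, the pair
`(d̂_w, d̂_y) = ((d̂_w^P; d̂_w^Z), d̂_y)` solves
`((1+ν)I_n + σUQ) d̂_w − σUA* d̂_y = r₁`, `−σAUQ d̂_w + (νI_m + σAUA*) d̂_y = r₂`
iff (i) `d̂_w^Z = (1+ν)⁻¹ r₁^Z`, (ii) `d̂_w^P` solves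
`((1+ν)I_p + σQ_PP + ν⁻¹(1+ν)σ A_P*A_P) d̂_w^P = r̄₁ + ν⁻¹σ A_P*(A_P r̄₁ + r̄₂)`, and
(iii) `d̂_y = ν⁻¹(A_P r̄₁ + r̄₂ − (1+ν) A_P d̂_w^P)`.  Moreover, the `p×p` coefficient
matrix `(1+ν)I_p + σQ_PP + ν⁻¹(1+ν)σ A_P*A_P` is symmetric positive definite. -/
theorem newton_system_block_reduction
    {m p q : ℕ} (hp : 1 ≤ p) (σ ν : ℝ) (hσ : 0 < σ) (hν : 0 < ν)
    (QPP : Matrix (Fin p) (Fin p) ℝ) (QPZ : Matrix (Fin p) (Fin q) ℝ)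
    (QZZ : Matrix (Fin q) (Fin q) ℝ)
    (hQ : (Matrix.fromBlocks QPP QPZ QPZᵀ QZZ).PosSemidef)
    (AP : Matrix (Fin m) (Fin p) ℝ) (AZ : Matrix (Fin m) (Fin q) ℝ)
    (r₁P : Fin p → ℝ) (r₁Z : Fin q → ℝ) (r₂ : Fin m → ℝ)
    (rbar₁ : Fin p → ℝ) (hrbar₁ : rbar₁ = r₁P - (σ * (1 + ν)⁻¹) • (QPZ *ᵥ r₁Z))
    (rbar₂ : Fin m → ℝ) (hrbar₂ : rbar₂ = r₂ + (σ * (1 + ν)⁻¹) • (AP *ᵥ (QPZ *ᵥ r₁Z))) :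
    (∀ (dP : Fin p → ℝ) (dZ : Fin q → ℝ) (dy : Fin m → ℝ),
      ((1 + ν) • (Sum.elim dP dZ) +
          σ • ((Matrix.fromBlocks (1 : Matrix (Fin p) (Fin p) ℝ) 0 0 0) *ᵥ
            ((Matrix.fromBlocks QPP QPZ QPZᵀ QZZ) *ᵥ (Sum.elim dP dZ))) -
          σ • ((Matrix.fromBlocks (1 : Matrix (Fin p) (Fin p) ℝ) 0 0 0) *ᵥ
            ((Matrix.fromCols AP AZ)ᵀ *ᵥ dy)) = Sum.elim r₁P r₁Z ∧
        -(σ • ((Matrix.fromCols AP AZ) *ᵥ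
            ((Matrix.fromBlocks (1 : Matrix (Fin p) (Fin p) ℝ) 0 0 0) *ᵥ
              ((Matrix.fromBlocks QPP QPZ QPZᵀ QZZ) *ᵥ (Sum.elim dP dZ))))) +
          ν • dy +
          σ • ((Matrix.fromCols AP AZ) *ᵥ
            ((Matrix.fromBlocks (1 : Matrix (Fin p) (Fin p) ℝ) 0 0 0) *ᵥ
              ((Matrix.fromCols AP AZ)ᵀ *ᵥ dy))) = r₂)
      ↔
      (dZ = (1 + ν)⁻¹ • r₁Z ∧
        (1 + ν) • dP + σ • (QPP *ᵥ dP) + (ν⁻¹ * (1 + ν) * σ) • ((APᵀ * AP) *ᵥ dP) =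
          rbar₁ + (ν⁻¹ * σ) • (APᵀ *ᵥ (AP *ᵥ rbar₁ + rbar₂)) ∧
        dy = ν⁻¹ • (AP *ᵥ rbar₁ + rbar₂ - (1 + ν) • (AP *ᵥ dP)))) ∧
    ((1 + ν) • (1 : Matrix (Fin p) (Fin p) ℝ) + σ • QPP +
        (ν⁻¹ * (1 + ν) * σ) • (APᵀ * AP)).PosDef := by
  constructor
  · intro dP dZ dy
    simp only [Matrix.fromBlocks_mulVec, Matrix.transpose_fromCols, Matrix.fromRows_mulVec,
      Matrix.fromCols_mulVec_sumElim, Matrix.one_mulVec, Matrix.zero_mulVec,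
      add_zero, zero_add, Matrix.mulVec_zero, sum_elim_smul, sum_elim_add, sum_elim_sub,
      sum_elim_eq_iff, smul_zero, sub_zero, Sum.elim_comp_inl, Sum.elim_comp_inr]
    exact newton_core σ ν hσ hν QPP QPZ AP r₁P r₁Z r₂ rbar₁ hrbar₁ rbar₂ hrbar₂ dP dZ dy
  · have hQPP : QPP.PosSemidef := by
      have := hQ.submatrix Sum.inl
      have e : (Matrix.fromBlocks QPP QPZ QPZᵀ QZZ).submatrix
          (Sum.inl : Fin p → Fin p ⊕ Fin q) Sum.inl = QPP := by
        ext i j; simp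
      rwa [e] at this
    have hAA : (APᵀ * AP).PosSemidef := by
      have := Matrix.posSemidef_conjTranspose_mul_self AP
      simpa using this
    rw [Matrix.posDef_iff_dotProduct_mulVec]
    constructor
    · exact ((herm_smul _ Matrix.isHermitian_one).add (herm_smul _ hQPP.1)).add
        (herm_smul _ hAA.1)
    · intro x hx
      have h1 : 0 < x ⬝ᵥ x := by
        simpa using Matrix.dotProduct_star_self_pos_iff.mpr hx
      have h2 : 0 ≤ x ⬝ᵥ QPP *ᵥ x := by simpa using hQPP.dotProduct_mulVec_nonneg x
      have h3 : 0 ≤ x ⬝ᵥ (APᵀ * AP) *ᵥ x := by simpa using hAA.dotProduct_mulVec_nonneg x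
      simp only [star_trivial, Matrix.add_mulVec, Matrix.smul_mulVec, Matrix.one_mulVec,
        dotProduct_add, dotProduct_smul, smul_eq_mul]
      have hc : 0 < ν⁻¹ * (1 + ν) * σ := by positivity
      nlinarith
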